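/- arXiv:2209.01150 — 2 statements merged into one kernel-verified Lean document; each statement's English description precedes it below -/
import Mathlib

section
/- Let X be a topological space satisfying the following 'quasi-Lindelöf' property with respect to a σ-ideal N: every family of open sets has a countable subfamily whose union differs from the union of the whole family by a set in N. For u : V → [-∞,∞] on an open V ⊂ X, define u_*(x) = sup over open W ∋ x of the N-essential infimum of u on V ∩ W. Then u_* is idempotent, i.e. (u_*)_* = u_* on V. -/
open Filter Topology Set

/-- A σ-ideal of subsets: closed under subsets and countable unions. -/
def IsSigmaIdeal {X : Type*} (N : Set (Set X)) : Prop :=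
  (∀ ⦃A B : Set X⦄, A ⊆ B → B ∈ N → A ∈ N) ∧
  (∀ f : ℕ → Set X, (∀ n, f n ∈ N) → (⋃ n, f n) ∈ N)

/-- The `N`-essential infimum of `u` on `E`. -/
noncomputable def essInfN {X : Type*} (N : Set (Set X)) (u : X → EReal) (E : Set X) : EReal :=
  sSup {k : EReal | {x | x ∈ E ∧ u x < k} ∈ N}

/-- The lsc-regularization `u_*`. -/
noncomputable def lscReg {X : Type*} [TopologicalSpace X] (N : Set (Set X)) (V : Set X)
    (u : X → EReal) (x : X) : EReal :=
  ⨆ (W : Set X) (_ : IsOpen W) (_ : x ∈ W), essInfN N u (V ∩ W)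

/-- The quasi-Lindelöf property: every family of open sets has a countable
subfamily whose union differs from the union of the whole family by a set in `N`. -/
def QuasiLindelof {X : Type*} [TopologicalSpace X] (N : Set (Set X)) : Prop :=
  ∀ 𝒱 : Set (Set X), (∀ U ∈ 𝒱, IsOpen U) →
    ∃ 𝒱' ⊆ 𝒱, 𝒱'.Countable ∧ (⋃₀ 𝒱 \ ⋃₀ 𝒱') ∈ N

lemma myUnionMem {X : Type*} {N : Set (Set X)} (hN : IsSigmaIdeal N)
    {A B : Set X} (hA : A ∈ N) (hB : B ∈ N) : A ∪ B ∈ N := by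
  have h := hN.2 (fun n => if n = 0 then A else B) (by intro n; split <;> assumption)
  refine hN.1 ?_ h
  intro x hx
  rcases hx with h' | h'
  · exact mem_iUnion.2 ⟨0, by simp [h']⟩
  · exact mem_iUnion.2 ⟨1, by simp [h']⟩

lemma mySUnionMem {X : Type*} {N : Set (Set X)} (hN : IsSigmaIdeal N) (h0 : ∅ ∈ N)
    {S : Set (Set X)} (hS : S.Countable) (hmem : ∀ s ∈ S, s ∈ N) : ⋃₀ S ∈ N := by
  rcases S.eq_empty_or_nonempty with rfl | hne
  · simpa using h0
  · obtain ⟨f, rfl⟩ := hS.exists_eq_range hne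
    rw [sUnion_range]
    exact hN.2 f fun n => hmem _ ⟨n, rfl⟩

lemma myKey {X : Type*} [TopologicalSpace X] {N : Set (Set X)}
    (hN : IsSigmaIdeal N) (hQL : QuasiLindelof N) (V : Set X) (u : X → EReal) :
    {y | y ∈ V ∧ u y < lscReg N V u y} ∈ N := by
  have h0 : ∅ ∈ N := by
    obtain ⟨𝒱', h1, h2, h3⟩ := hQL ∅ (by simp)
    have : 𝒱' = ∅ := subset_empty_iff.1 h1
    simpa [this] using h3
  have hB : ∀ q : ℚ, ∃ B ∈ N, ∀ y, y ∈ V → u y < ((q : ℝ) : EReal) →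
      ((q : ℝ) : EReal) < lscReg N V u y → y ∈ B := by
    intro q
    set 𝒱 : Set (Set X) := {W | IsOpen W ∧ {z | z ∈ V ∩ W ∧ u z < ((q : ℝ) : EReal)} ∈ N} with h𝒱
    obtain ⟨𝒱', hsub, hcnt, hdiff⟩ := hQL 𝒱 fun W hW => hW.1
    refine ⟨(⋃₀ 𝒱 \ ⋃₀ 𝒱') ∪
        ⋃₀ ((fun W => {z | z ∈ V ∩ W ∧ u z < ((q : ℝ) : EReal)}) '' 𝒱'), ?_, ?_⟩
    · refine myUnionMem hN hdiff (mySUnionMem hN h0 (hcnt.image _) ?_)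
      rintro s ⟨W, hW, rfl⟩
      exact (hsub hW).2
    · intro y hyV hyq hql
      have : ∃ W, IsOpen W ∧ y ∈ W ∧ ((q : ℝ) : EReal) < essInfN N u (V ∩ W) := by
        rw [lscReg] at hql
        simp only [lt_iSup_iff] at hql
        obtain ⟨W, hWo, hyW, h⟩ := hql
        exact ⟨W, hWo, hyW, h⟩
      obtain ⟨W, hWo, hyW, hq⟩ := this
      have hWmem : W ∈ 𝒱 := by
        rw [essInfN, lt_sSup_iff] at hq
        obtain ⟨k, hk, hqk⟩ := hq
        refine ⟨hWo, hN.1 ?_ hk⟩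
        intro z hz
        exact ⟨hz.1, hz.2.trans hqk⟩
      have hyU : y ∈ ⋃₀ 𝒱 := ⟨W, hWmem, hyW⟩
      by_cases hy' : y ∈ ⋃₀ 𝒱'
      · obtain ⟨W', hW', hyW'⟩ := hy'
        exact Or.inr ⟨_, ⟨W', hW', rfl⟩, ⟨⟨hyV, hyW'⟩, hyq⟩⟩
      · exact Or.inl ⟨hyU, hy'⟩
  choose B hBN hBmem using hB
  have hU : (⋃ q : ℚ, B q) ∈ N := by
    have : (⋃ q : ℚ, B q) = ⋃₀ (range B) := (sUnion_range B).symm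
    rw [this]
    exact mySUnionMem hN h0 (countable_range B) (by rintro s ⟨q, rfl⟩; exact hBN q)
  refine hN.1 ?_ hU
  intro y ⟨hyV, hlt⟩
  obtain ⟨q, h1, h2⟩ := EReal.exists_rat_btwn_of_lt hlt
  exact mem_iUnion.2 ⟨q, hBmem q y hyV h1 h2⟩

/-- In a topological space with the quasi-Lindelöf property with respect to a
σ-ideal `N`, the regularization `u ↦ u_*` is idempotent: `(u_*)_* = u_*` on `V`. -/
theorem stmt1 {X : Type*} [TopologicalSpace X] (N : Set (Set X))
    (hN : IsSigmaIdeal N) (hQL : QuasiLindelof N)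
    (V : Set X) (hV : IsOpen V) (u : X → EReal) :
    ∀ x ∈ V, lscReg N V (lscReg N V u) x = lscReg N V u x := by
  have h0 : ∅ ∈ N := by
    obtain ⟨𝒱', h1, h2, h3⟩ := hQL ∅ (by simp)
    have : 𝒱' = ∅ := subset_empty_iff.1 h1
    simpa [this] using h3
  have hA := myKey hN hQL V u
  intro x _hx
  apply le_antisymm
  · rw [lscReg]
    refine iSup_le fun W => iSup_le fun hWo => iSup_le fun hxW => ?_
    refine sSup_le fun k hk => ?_
    have hkN : {z | z ∈ V ∩ W ∧ u z < k} ∈ N := by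
      refine hN.1 ?_ (myUnionMem hN hk hA)
      intro z ⟨hz, huz⟩
      by_cases h : lscReg N V u z < k
      · exact Or.inl ⟨hz, h⟩
      · exact Or.inr ⟨hz.1, huz.trans_le (not_lt.1 h)⟩
    have h1 : k ≤ essInfN N u (V ∩ W) := le_sSup hkN
    refine h1.trans ?_
    rw [lscReg]
    exact le_iSup_of_le W (le_iSup_of_le hWo (le_iSup_of_le hxW le_rfl))
  · rw [lscReg, lscReg]
    refine iSup_le fun W => iSup_le fun hWo => iSup_le fun hxW => ?_
    refine le_iSup_of_le W (le_iSup_of_le hWo (le_iSup_of_le hxW ?_))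
    refine sSup_le_sSup ?_
    intro k hk
    have hempty : {z | z ∈ V ∩ W ∧ lscReg N V u z < k} = ∅ := by
      ext z
      simp only [mem_setOf_eq, mem_empty_iff_false, iff_false, not_and]
      intro hz
      have : essInfN N u (V ∩ W) ≤ lscReg N V u z := by
        rw [lscReg]
        exact le_iSup_of_le W (le_iSup_of_le hWo (le_iSup_of_le hz.2 le_rfl))
      exact not_lt.2 ((le_sSup hk).trans this)
    show {z | z ∈ V ∩ W ∧ lscReg N V u z < k} ∈ N
    rw [hempty]; exact h0
end

section
/- Let X be a topological space, N a σ-ideal of subsets of X satisfying the quasi-Lindelöf property (every family of open sets admits a countable subfamily covering the union up to a set in N). Let F be a nonempty family of upper semicontinuous functions on an open set V that is closed under taking pointwise minima of finitely many members. If g = inf_{u∈F} u is the pointwise infimum, then there exists a decreasing sequence (u_j) in F and a set E ∈ N such that u_j(x) → g(x) for all x ∈ V \ E. -/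
open Filter Topology Set

/-- If `F` is a nonempty family of upper semicontinuous functions on an open set `V`,
closed under finite minima, and the σ-ideal `N` has the quasi-Lindelöf property,
then the pointwise infimum `g` of `F` is the limit of a decreasing sequence from `F`
at every point of `V` outside a set in `N`. -/
theorem stmt5 {X : Type*} [TopologicalSpace X] (N : Set (Set X))
    (hN : IsSigmaIdeal N) (hQL : QuasiLindelof N)
    (V : Set X) (hV : IsOpen V) (F : Set (X → EReal)) (hFne : F.Nonempty)
    (husc : ∀ u ∈ F, ∀ a : ℝ, IsOpen {x | x ∈ V ∧ u x < (a : EReal)})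
    (hmin : ∀ u ∈ F, ∀ v ∈ F, (fun x => min (u x) (v x)) ∈ F) :
    ∃ us : ℕ → (X → EReal), (∀ j, us j ∈ F) ∧ (∀ j x, us (j + 1) x ≤ us j x) ∧
      ∃ E ∈ N, ∀ x ∈ V \ E,
        Filter.Tendsto (fun j => us j x) Filter.atTop (𝓝 (⨅ u ∈ F, u x)) := by
  classical
  set f : ℚ → (X → EReal) → Set X := fun q u => {x | x ∈ V ∧ u x < ((q : ℝ) : EReal)} with hf
  -- For each rational level, extract a countable subfamily of F covering up to N
  have H : ∀ q : ℚ, ∃ C : Set (X → EReal), C ⊆ F ∧ C.Countable ∧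
      ((⋃ u ∈ F, f q u) \ ⋃ u ∈ C, f q u) ∈ N := by
    intro q
    obtain ⟨𝒱', h𝒱'sub, h𝒱'cnt, h𝒱'N⟩ := hQL ((f q) '' F) (by
      rintro U ⟨u, hu, rfl⟩; exact husc u hu q)
    have hex : ∀ W ∈ 𝒱', ∃ u, u ∈ F ∧ f q u = W := by
      intro W hW
      obtain ⟨u, hu, rfl⟩ := h𝒱'sub hW
      exact ⟨u, hu, rfl⟩
    choose! g hg1 hg2 using hex
    refine ⟨g '' 𝒱', ?_, h𝒱'cnt.image g, hN.1 ?_ h𝒱'N⟩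
    · rintro _ ⟨W, hW, rfl⟩; exact hg1 W hW
    · intro x hx
      constructor
      · rw [sUnion_image]
        exact hx.1
      · rw [sUnion_eq_biUnion]
        intro hmem
        obtain ⟨W, hW, hxW⟩ := mem_iUnion₂.1 hmem
        exact hx.2 (mem_iUnion₂.2 ⟨g W, ⟨W, hW, rfl⟩, by rw [hg2 W hW]; exact hxW⟩)
  choose C hCsub hCcnt hCN using H
  obtain ⟨u0, hu0⟩ := hFne
  set C0 : Set (X → EReal) := insert u0 (⋃ q : ℚ, C q) with hC0
  have hC0cnt : C0.Countable := (countable_iUnion hCcnt).insert u0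
  have hC0sub : C0 ⊆ F := by
    rintro u (rfl | hu)
    · exact hu0
    · obtain ⟨q, hq⟩ := mem_iUnion.1 hu
      exact hCsub q hq
  obtain ⟨v, hv⟩ := hC0cnt.exists_eq_range ⟨u0, mem_insert _ _⟩
  have hvF : ∀ n, v n ∈ F := fun n => hC0sub (hv ▸ mem_range_self n)
  -- running minima
  set us : ℕ → X → EReal := fun j =>
    Nat.rec (motive := fun _ => X → EReal) (v 0) (fun j w x => min (w x) (v (j+1) x)) j
    with hus
  have husF : ∀ j, us j ∈ F := by
    intro j
    induction j with
    | zero => exact hvF 0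
    | succ j ih => exact hmin _ ih _ (hvF (j+1))
  have hdec : ∀ j x, us (j+1) x ≤ us j x := fun j x => min_le_left _ _
  have hanti : ∀ x, Antitone fun j => us j x := fun x =>
    antitone_nat_of_succ_le (fun j => hdec j x)
  have hle_v : ∀ j i, i ≤ j → ∀ x, us j x ≤ v i x := by
    intro j
    induction j with
    | zero => intro i hi x; interval_cases i; exact le_refl _
    | succ j ih =>
      intro i hi x
      rcases Nat.lt_succ_iff_lt_or_eq.1 (Nat.lt_succ_of_le hi) with h | rfl
      · exact (min_le_left _ _).trans (ih i (Nat.lt_succ_iff.1 h) x)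
      · exact min_le_right _ _
  -- the exceptional set
  set E : Set X := ⋃ q : ℚ, ((⋃ u ∈ F, f q u) \ ⋃ u ∈ C q, f q u) with hE
  have hEN : E ∈ N := by
    have hsurj : Function.Surjective ((Denumerable.eqv ℚ).symm) :=
      (Denumerable.eqv ℚ).symm.surjective
    have : E = ⋃ n : ℕ, ((fun q => (⋃ u ∈ F, f q u) \ ⋃ u ∈ C q, f q u)
        ((Denumerable.eqv ℚ).symm n)) := (hsurj.iUnion_comp _).symm
    rw [this]
    exact hN.2 _ fun n => hCN _
  refine ⟨us, husF, hdec, E, hEN, ?_⟩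
  intro x hx
  have key : (⨅ j, us j x) = ⨅ u ∈ F, u x := by
    apply le_antisymm
    · by_contra hlt
      push_neg at hlt
      obtain ⟨q, hq1, hq2⟩ := EReal.exists_rat_btwn_of_lt hlt
      -- some u ∈ F with u x < q
      have : ∃ u, ∃ _ : u ∈ F, u x < ((q : ℝ) : EReal) := by
        simpa [iInf_lt_iff] using hq1
      obtain ⟨u, huF, huq⟩ := this
      have hxU : x ∈ ⋃ u ∈ F, f q u := mem_iUnion₂.2 ⟨u, huF, hx.1, huq⟩
      have hxE : x ∉ (⋃ u ∈ F, f q u) \ ⋃ u ∈ C q, f q u := fun h =>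
        hx.2 (mem_iUnion.2 ⟨q, h⟩)
      have hxC : x ∈ ⋃ u ∈ C q, f q u := by
        by_contra h; exact hxE ⟨hxU, h⟩
      obtain ⟨w, hwC, hxw⟩ := mem_iUnion₂.1 hxC
      have hwC0 : w ∈ C0 := mem_insert_of_mem _ (mem_iUnion.2 ⟨q, hwC⟩)
      obtain ⟨i, rfl⟩ := hv ▸ hwC0
      have h1 : us i x ≤ v i x := hle_v i i le_rfl x
      have h2 : (⨅ j, us j x) ≤ us i x := iInf_le _ i
      exact ((h2.trans h1).trans_lt hxw.2).not_gt hq2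
    · exact le_iInf fun j => iInf₂_le (us j) (husF j)
  rw [← key]
  exact tendsto_atTop_iInf (hanti x)
end
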